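/- Let A be an n×n real symmetric positive definite matrix, let B be an m×n real matrix, and let C be an m×m real symmetric positive semidefinite matrix such that xᵀCx > 0 for every nonzero x ∈ ℝᵐ with Bᵀx = 0. Then the (n+m)×(n+m) block matrix [[A, Bᵀ], [B, −C]] is invertible; equivalently, the saddle-point system [[A, Bᵀ], [B, −C]]·[u; p] = [g; f] has a unique solution for every right-hand side. -/

import Mathlib

open Matrix

/-- If `A` is an `n×n` real symmetric positive definite matrix, `B` an
`m×n` real matrix, and `C` an `m×m` real symmetric positive semidefinite matrix which is
positive definite on the kernel of `Bᵀ`, then the saddle-point block matrix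
`[[A, Bᵀ], [B, -C]]` is invertible. -/
theorem saddle_point_matrix_isUnit
    (n m : ℕ)
    (A : Matrix (Fin n) (Fin n) ℝ)
    (B : Matrix (Fin m) (Fin n) ℝ)
    (C : Matrix (Fin m) (Fin m) ℝ)
    (hA : A.PosDef)
    (hC : C.PosSemidef)
    (hCker : ∀ x : Fin m → ℝ, x ≠ 0 → Bᵀ.mulVec x = 0 → 0 < x ⬝ᵥ C.mulVec x) :
    IsUnit (Matrix.fromBlocks A Bᵀ B (-C)) := by
  rw [← Matrix.mulVec_injective_iff_isUnit]
  suffices hker : ∀ v, (Matrix.fromBlocks A Bᵀ B (-C)).mulVec v = 0 → v = 0 by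
    intro x y hxy
    have := hker (x - y) (by rw [Matrix.mulVec_sub, hxy, sub_self])
    exact sub_eq_zero.mp this
  intro v hv
  set u : Fin n → ℝ := fun i => v (Sum.inl i) with hu
  set p : Fin m → ℝ := fun i => v (Sum.inr i) with hp
  have hvel : v = Sum.elim u p := by funext i; cases i <;> rfl
  rw [hvel, Matrix.fromBlocks_mulVec] at hv
  have h1 : A.mulVec u + Bᵀ.mulVec p = 0 := by
    funext i; exact congrFun hv (Sum.inl i)
  have h2 : B.mulVec u + (-C).mulVec p = 0 := by
    funext i; exact congrFun hv (Sum.inr i)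
  -- scalar identities
  have key : u ⬝ᵥ (Bᵀ.mulVec p) = p ⬝ᵥ (B.mulVec u) := by
    rw [Matrix.mulVec_transpose, dotProduct_comm, Matrix.dotProduct_mulVec]
  have e1 : u ⬝ᵥ A.mulVec u + u ⬝ᵥ Bᵀ.mulVec p = 0 := by
    have := congrArg (fun w => u ⬝ᵥ w) h1
    simpa [dotProduct_add] using this
  have e2 : p ⬝ᵥ B.mulVec u = p ⬝ᵥ C.mulVec p := by
    have := congrArg (fun w => p ⬝ᵥ w) h2
    simp [dotProduct_add, Matrix.neg_mulVec, sub_eq_zero] at this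
    linarith [this]
  have eAu : u ⬝ᵥ A.mulVec u = - (p ⬝ᵥ C.mulVec p) := by
    rw [key, e2] at e1; linarith
  have hu0 : u = 0 := by
    by_contra h
    have h1' := hA.dotProduct_mulVec_pos h
    have h2' := hC.dotProduct_mulVec_nonneg p
    simp at h1' h2'
    linarith
  have hBp : Bᵀ.mulVec p = 0 := by
    rw [hu0, Matrix.mulVec_zero, zero_add] at h1; exact h1
  have hp0 : p = 0 := by
    by_contra h
    have := hCker p h hBp
    rw [hu0] at eAu
    simp at eAu
    linarith
  rw [hvel, hu0, hp0]
  funext i; cases i <;> simp
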